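/- If G and H are k-uniform hypergraphs, μ is an eigenvalue of A(G) with eigenvector y, and λ is an eigenvalue of A(H) with eigenvector x, then μ + λ is an eigenvalue of A(G ⊕ H) with eigenvector z defined by z_{(v,u)} = y_v x_u. -/
import Mathlib


open Matrix BigOperators

set_option linter.unusedSectionVars false

variable {V : Type*} [Fintype V] [DecidableEq V]

/-- Adjacency matrix of a (multi-)hypergraph given by its multiset of edges:
entry `(i,j)` is the number of edges containing both `i` and `j`, with zero diagonal. -/
def adjacencyMatrix (E : Multiset (Finset V)) : Matrix V V ℝ :=
  Matrix.of fun i j => if i = j then 0 else ((E.filter (fun e => i ∈ e ∧ j ∈ e)).card : ℝ)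

lemma adjacency_isHermitian (E : Multiset (Finset V)) : (adjacencyMatrix E).IsHermitian := by
  unfold Matrix.IsHermitian
  ext i j
  by_cases h : i = j
  · subst h; simp [adjacencyMatrix]
  · simp only [adjacencyMatrix, Matrix.conjTranspose_apply, Matrix.of_apply, h, Ne.symm h,
      if_false, star_trivial]
    congr 1
    exact congrArg Multiset.card (Multiset.filter_congr (fun e _ => and_comm))

/-- Energy of a (multi-)hypergraph: sum of the absolute values of the adjacency eigenvalues. -/
noncomputable def energy (E : Multiset (Finset V)) : ℝ :=
  ∑ i, |(adjacency_isHermitian E).eigenvalues i|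

/-- Degree of a vertex: the number of edges containing it. -/
def hdegree (E : Multiset (Finset V)) (v : V) : ℕ := (E.filter (fun e => v ∈ e)).card

/-- Zagreb index: sum of squares of vertex degrees. -/
def zagreb (E : Multiset (Finset V)) : ℕ := ∑ v, (hdegree E v)^2

/-- The sum `G ⊕ H` of two hypergraphs: vertex set `V₁ × V₂`, with edges `{v} × e`
for `v ∈ V(G)`, `e ∈ E(H)`, and `f × {u}` for `f ∈ E(G)`, `u ∈ V(H)`. -/
def sumEdges {V₁ V₂ : Type*} [Fintype V₁] [DecidableEq V₁] [Fintype V₂] [DecidableEq V₂]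
    (E₁ : Finset (Finset V₁)) (E₂ : Finset (Finset V₂)) : Finset (Finset (V₁ × V₂)) :=
  (((Finset.univ : Finset V₁) ×ˢ E₂).image fun p => p.2.image fun u => (p.1, u)) ∪
  ((E₁ ×ˢ (Finset.univ : Finset V₂)).image fun p => p.1.image fun v => (v, p.2))


section Aux
variable {V₁ V₂ : Type*} [Fintype V₁] [DecidableEq V₁] [Fintype V₂] [DecidableEq V₂]

lemma mem_img₁ {w : V₁} {e : Finset V₂} {a : V₁} {b : V₂} :
    (a, b) ∈ e.image (fun z => (w, z)) ↔ a = w ∧ b ∈ e := by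
  constructor
  · rintro h
    obtain ⟨z, hz, hzz⟩ := Finset.mem_image.1 h
    obtain ⟨rfl, rfl⟩ := Prod.mk.injEq .. ▸ hzz
    exact ⟨rfl, hz⟩
  · rintro ⟨rfl, hb⟩
    exact Finset.mem_image.2 ⟨b, hb, rfl⟩

lemma mem_img₂ {z : V₂} {f : Finset V₁} {a : V₁} {b : V₂} :
    (a, b) ∈ f.image (fun w => (w, z)) ↔ b = z ∧ a ∈ f := by
  constructor
  · rintro h
    obtain ⟨w, hw, hww⟩ := Finset.mem_image.1 h
    obtain ⟨rfl, rfl⟩ := Prod.mk.injEq .. ▸ hww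
    exact ⟨rfl, hw⟩
  · rintro ⟨rfl, ha⟩
    exact Finset.mem_image.2 ⟨a, ha, rfl⟩
end Aux

section Aux2
set_option linter.unusedSectionVars false
variable {V₁ V₂ : Type*} [Fintype V₁] [DecidableEq V₁] [Fintype V₂] [DecidableEq V₂]

lemma count_lemma (k : ℕ) (hk : 2 ≤ k)
    (E₁ : Finset (Finset V₁)) (E₂ : Finset (Finset V₂))
    (hu₁ : ∀ e ∈ E₁, e.card = k) (hu₂ : ∀ e ∈ E₂, e.card = k)
    (v v' : V₁) (u u' : V₂) :
    ((sumEdges E₁ E₂).filter (fun g => (v, u) ∈ g ∧ (v', u') ∈ g)).card =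
      (if v = v' then (E₂.filter (fun e => u ∈ e ∧ u' ∈ e)).card else 0) +
      (if u = u' then (E₁.filter (fun f => v ∈ f ∧ v' ∈ f)).card else 0) := by
  classical
  set S₁ := (((Finset.univ : Finset V₁) ×ˢ E₂).image fun p => p.2.image fun z => (p.1, z)) with hS₁
  set S₂ := ((E₁ ×ˢ (Finset.univ : Finset V₂)).image fun p => p.1.image fun w => (w, p.2)) with hS₂
  have hsum : sumEdges E₁ E₂ = S₁ ∪ S₂ := rfl
  have hdisj : Disjoint S₁ S₂ := by
    rw [Finset.disjoint_left]
    rintro g hg1 hg2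
    obtain ⟨⟨w, e⟩, hpe, rfl⟩ := Finset.mem_image.1 hg1
    obtain ⟨⟨f, z⟩, hpf, hgf⟩ := Finset.mem_image.1 hg2
    simp only [Finset.mem_product] at hpe
    have hcard : 1 < e.card := by rw [hu₂ e hpe.2]; omega
    obtain ⟨a, ha, b, hb, hab⟩ := Finset.one_lt_card.1 hcard
    have h1 : (w, a) ∈ f.image fun w => (w, z) := by rw [hgf]; exact mem_img₁.2 ⟨rfl, ha⟩
    have h2 : (w, b) ∈ f.image fun w => (w, z) := by rw [hgf]; exact mem_img₁.2 ⟨rfl, hb⟩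
    exact hab ((mem_img₂.1 h1).1.trans (mem_img₂.1 h2).1.symm)
  have hA : (S₁.filter (fun g => (v, u) ∈ g ∧ (v', u') ∈ g)).card =
      if v = v' then (E₂.filter (fun e => u ∈ e ∧ u' ∈ e)).card else 0 := by
    by_cases hvv : v = v'
    · subst hvv
      rw [if_pos rfl]
      have himg : S₁.filter (fun g => (v, u) ∈ g ∧ (v, u') ∈ g) =
          (E₂.filter (fun e => u ∈ e ∧ u' ∈ e)).image (fun e => e.image fun z => (v, z)) := by
        ext g
        simp only [Finset.mem_filter, Finset.mem_image, hS₁]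
        constructor
        · rintro ⟨⟨⟨w, e⟩, hpe, rfl⟩, h1, h2⟩
          simp only [Finset.mem_product] at hpe
          obtain ⟨rfl, hu⟩ := mem_img₁.1 h1
          exact ⟨e, ⟨hpe.2, hu, (mem_img₁.1 h2).2⟩, rfl⟩
        · rintro ⟨e, ⟨he, hu, hu'⟩, rfl⟩
          exact ⟨⟨(v, e), Finset.mem_product.2 ⟨Finset.mem_univ _, he⟩, rfl⟩,
            mem_img₁.2 ⟨rfl, hu⟩, mem_img₁.2 ⟨rfl, hu'⟩⟩
      rw [himg]
      apply Finset.card_image_of_injOn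
      intro e he e' he' heq0
      have heq : Finset.image (fun z => (v, z)) e = Finset.image (fun z => (v, z)) e' := heq0
      ext z
      constructor
      · intro hz
        have : (v, z) ∈ Finset.image (fun z => (v, z)) e' := heq ▸ mem_img₁.2 ⟨rfl, hz⟩
        exact (mem_img₁.1 this).2
      · intro hz
        have : (v, z) ∈ Finset.image (fun z => (v, z)) e := heq.symm ▸ mem_img₁.2 ⟨rfl, hz⟩
        exact (mem_img₁.1 this).2
    · rw [if_neg hvv, Finset.card_eq_zero, Finset.filter_eq_empty_iff]
      rintro g hg ⟨h1, h2⟩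
      obtain ⟨⟨w, e⟩, hpe, rfl⟩ := Finset.mem_image.1 hg
      exact hvv ((mem_img₁.1 h1).1.trans (mem_img₁.1 h2).1.symm)
  have hB : (S₂.filter (fun g => (v, u) ∈ g ∧ (v', u') ∈ g)).card =
      if u = u' then (E₁.filter (fun f => v ∈ f ∧ v' ∈ f)).card else 0 := by
    by_cases huu : u = u'
    · subst huu
      rw [if_pos rfl]
      have himg : S₂.filter (fun g => (v, u) ∈ g ∧ (v', u) ∈ g) =
          (E₁.filter (fun f => v ∈ f ∧ v' ∈ f)).image (fun f => f.image fun w => (w, u)) := by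
        ext g
        simp only [Finset.mem_filter, Finset.mem_image, hS₂]
        constructor
        · rintro ⟨⟨⟨f, z⟩, hpf, rfl⟩, h1, h2⟩
          simp only [Finset.mem_product] at hpf
          obtain ⟨rfl, hv⟩ := mem_img₂.1 h1
          exact ⟨f, ⟨hpf.1, hv, (mem_img₂.1 h2).2⟩, rfl⟩
        · rintro ⟨f, ⟨hf, hv, hv'⟩, rfl⟩
          exact ⟨⟨(f, u), Finset.mem_product.2 ⟨hf, Finset.mem_univ _⟩, rfl⟩,
            mem_img₂.2 ⟨rfl, hv⟩, mem_img₂.2 ⟨rfl, hv'⟩⟩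
      rw [himg]
      apply Finset.card_image_of_injOn
      intro f hf f' hf' heq0
      have heq : Finset.image (fun w => (w, u)) f = Finset.image (fun w => (w, u)) f' := heq0
      ext w
      constructor
      · intro hw
        have : (w, u) ∈ Finset.image (fun w => (w, u)) f' := heq ▸ mem_img₂.2 ⟨rfl, hw⟩
        exact (mem_img₂.1 this).2
      · intro hw
        have : (w, u) ∈ Finset.image (fun w => (w, u)) f := heq.symm ▸ mem_img₂.2 ⟨rfl, hw⟩
        exact (mem_img₂.1 this).2
    · rw [if_neg huu, Finset.card_eq_zero, Finset.filter_eq_empty_iff]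
      rintro g hg ⟨h1, h2⟩
      obtain ⟨⟨f, z⟩, hpf, rfl⟩ := Finset.mem_image.1 hg
      exact huu ((mem_img₂.1 h1).1.trans (mem_img₂.1 h2).1.symm)
  rw [hsum, Finset.filter_union,
    Finset.card_union_of_disjoint (Finset.disjoint_filter_filter hdisj), hA, hB]

lemma entry_lemma (k : ℕ) (hk : 2 ≤ k)
    (E₁ : Finset (Finset V₁)) (E₂ : Finset (Finset V₂))
    (hu₁ : ∀ e ∈ E₁, e.card = k) (hu₂ : ∀ e ∈ E₂, e.card = k)
    (v v' : V₁) (u u' : V₂) :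
    adjacencyMatrix (sumEdges E₁ E₂).val (v, u) (v', u') =
      (if v = v' then adjacencyMatrix E₂.val u u' else 0) +
      (if u = u' then adjacencyMatrix E₁.val v v' else 0) := by
  classical
  by_cases h : (v, u) = (v', u')
  · obtain ⟨rfl, rfl⟩ := Prod.mk.injEq .. ▸ h
    simp [adjacencyMatrix]
  · have hc : (Multiset.filter (fun g => (v, u) ∈ g ∧ (v', u') ∈ g) (sumEdges E₁ E₂).val).card
        = ((sumEdges E₁ E₂).filter (fun g => (v, u) ∈ g ∧ (v', u') ∈ g)).card := rfl
    have key := count_lemma k hk E₁ E₂ hu₁ hu₂ v v' u u'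
    simp only [adjacencyMatrix, Matrix.of_apply, if_neg h]
    rw [hc, key]
    have hne : v = v' → u ≠ u' := by rintro rfl rfl; exact h rfl
    have e2 : ∀ (a b : V₂), a ≠ b →
        adjacencyMatrix E₂.val a b = ((E₂.filter (fun e => a ∈ e ∧ b ∈ e)).card : ℝ) := by
      intro a b hab
      simp only [adjacencyMatrix, Matrix.of_apply, if_neg hab]
      rfl
    have e1 : ∀ (a b : V₁), a ≠ b →
        adjacencyMatrix E₁.val a b = ((E₁.filter (fun f => a ∈ f ∧ b ∈ f)).card : ℝ) := by
      intro a b hab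
      simp only [adjacencyMatrix, Matrix.of_apply, if_neg hab]
      rfl
    by_cases hv : v = v' <;> by_cases hu : u = u'
    · exact absurd hu (hne hv)
    · subst hv
      rw [if_pos rfl, if_neg hu, if_neg hu]
      simp only [add_zero]
      rw [show (Multiset.filter (fun e => u ∈ e ∧ u' ∈ e) E₂.val)
          = (E₂.filter (fun e => u ∈ e ∧ u' ∈ e)).val from rfl]
      simp only [if_true, if_neg hu, add_zero]
      rfl
    · subst hu
      rw [if_neg hv, if_neg hv, if_pos rfl]
      simp only [zero_add, if_pos rfl]
      rw [show (Multiset.filter (fun f => v ∈ f ∧ v' ∈ f) E₁.val)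
          = (E₁.filter (fun f => v ∈ f ∧ v' ∈ f)).val from rfl]
      simp only [if_true, if_neg hv]
      rfl
    · rw [if_neg hv, if_neg hv, if_neg hu, if_neg hu]
      simp

end Aux2

/-- if `μ` is an eigenvalue of `A(G)` with eigenvector `y` and `λ` an
eigenvalue of `A(H)` with eigenvector `x`, then `μ + λ` is an eigenvalue of `A(G ⊕ H)`
with eigenvector `z (v,u) = y v * x u`. -/
theorem stmt_4 {V₁ V₂ : Type*} [Fintype V₁] [DecidableEq V₁] [Fintype V₂] [DecidableEq V₂]
    (k : ℕ) (hk : 2 ≤ k)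
    (E₁ : Finset (Finset V₁)) (E₂ : Finset (Finset V₂))
    (hu₁ : ∀ e ∈ E₁, e.card = k) (hu₂ : ∀ e ∈ E₂, e.card = k)
    (mu lam : ℝ) (y : V₁ → ℝ) (x : V₂ → ℝ) (hy : y ≠ 0) (hx : x ≠ 0)
    (hmu : (adjacencyMatrix E₁.val).mulVec y = mu • y)
    (hlam : (adjacencyMatrix E₂.val).mulVec x = lam • x) :
    (adjacencyMatrix (sumEdges E₁ E₂).val).mulVec (fun p => y p.1 * x p.2) =
      (mu + lam) • (fun p : V₁ × V₂ => y p.1 * x p.2) ∧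
    (fun p : V₁ × V₂ => y p.1 * x p.2) ≠ 0 := by
  classical
  constructor
  · funext p
    obtain ⟨v, u⟩ := p
    have hmu' := congrFun hmu v
    have hlam' := congrFun hlam u
    simp only [Matrix.mulVec, dotProduct, Pi.smul_apply, smul_eq_mul] at hmu' hlam' ⊢
    rw [Fintype.sum_prod_type]
    have hpt : ∀ v' u', adjacencyMatrix (sumEdges E₁ E₂).val (v, u) (v', u') * (y v' * x u')
        = (if v = v' then adjacencyMatrix E₂.val u u' * (y v' * x u') else 0)
        + (if u = u' then adjacencyMatrix E₁.val v v' * (y v' * x u') else 0) := by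
      intro v' u'
      rw [entry_lemma k hk E₁ E₂ hu₁ hu₂, add_mul]
      congr 1 <;> split <;> simp
    simp only [hpt, Finset.sum_add_distrib]
    have T1 : ∑ v', ∑ u', (if v = v' then adjacencyMatrix E₂.val u u' * (y v' * x u') else 0)
        = y v * (lam * x u) := by
      have : ∀ v', ∑ u', (if v = v' then adjacencyMatrix E₂.val u u' * (y v' * x u') else 0)
          = if v = v' then ∑ u', adjacencyMatrix E₂.val u u' * (y v' * x u') else 0 := by
        intro v'; split <;> simp
      simp only [this, Finset.sum_ite_eq, Finset.mem_univ, if_pos]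
      rw [← hlam', Finset.mul_sum]
      exact Finset.sum_congr rfl fun u' _ => by ring
    have T2 : ∑ v', ∑ u', (if u = u' then adjacencyMatrix E₁.val v v' * (y v' * x u') else 0)
        = mu * y v * x u := by
      simp only [Finset.sum_ite_eq, Finset.mem_univ, if_pos]
      rw [← hmu', Finset.sum_mul]
      exact Finset.sum_congr rfl fun v' _ => by ring
    rw [T1, T2]
    ring
  · intro hzero
    obtain ⟨v, hv⟩ := Function.ne_iff.1 hy
    obtain ⟨u, hu⟩ := Function.ne_iff.1 hx
    have := congrFun hzero (v, u)
    simp only [Pi.zero_apply] at this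
    rcases mul_eq_zero.1 this with h | h
    · exact hv h
    · exact hu h
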